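/- Let f be μ-strongly convex (μ > 0) with H-Lipschitz Hessian, ∇f(x*) = 0, and suppose a Newton-type cubic-regularized step produces x^{k+1} = x^k − [M_k + (H/2)‖x^{k+1}−x^k‖ I]^{-1}∇f(x^k) where M_k := H^k + l^k I satisfies μI ⪯ ∇²f(x^k) ⪯ M_k, with l^k = (1/n)Σ_i ‖H_i^k − ∇²f_i(x^k)‖_F and all f_i having L_F-Lipschitz Hessian in Frobenius norm. Then ‖x^{k+1}−x*‖² ≤ (5H²/(4μ²))‖x^{k+1}−x*‖²‖x^k−x*‖² + (20/μ²)‖x^k−x*‖² H_err^k + (5(H²+8L_F²)/(2μ²))‖x^k−x*‖⁴, where H_err^k := (1/n)Σ_i‖H_i^k − ∇²f_i(x*)‖_F². -/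

import Mathlib

open scoped RealInnerProductSpace

attribute [local instance] Matrix.frobeniusNormedAddCommGroup Matrix.frobeniusNormedSpace

/-- A matrix viewed as a continuous linear map on Euclidean space; its operator norm
is the spectral norm of the matrix. -/
noncomputable def Matrix.toCLM' {d : ℕ} (A : Matrix (Fin d) (Fin d) ℝ) :
    EuclideanSpace ℝ (Fin d) →L[ℝ] EuclideanSpace ℝ (Fin d) :=
  LinearMap.toContinuousLinearMap (Matrix.toEuclideanLin A)

private lemma toCLM'_add {d : ℕ} (B C : Matrix (Fin d) (Fin d) ℝ) :
    Matrix.toCLM' (B + C) = Matrix.toCLM' B + Matrix.toCLM' C := by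
  ext v i; simp [Matrix.toCLM', Matrix.toEuclideanLin_apply, Matrix.add_mulVec]

private lemma toCLM'_smul {d : ℕ} (c : ℝ) (B : Matrix (Fin d) (Fin d) ℝ) :
    Matrix.toCLM' (c • B) = c • Matrix.toCLM' B := by
  ext v i; simp [Matrix.toCLM', Matrix.toEuclideanLin_apply, Matrix.smul_mulVec]

private lemma toCLM'_one {d : ℕ} :
    Matrix.toCLM' (1 : Matrix (Fin d) (Fin d) ℝ) = ContinuousLinearMap.id ℝ _ := by
  ext v i; simp [Matrix.toCLM', Matrix.toEuclideanLin_apply]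

private lemma frob_sq {d : ℕ} (B : Matrix (Fin d) (Fin d) ℝ) :
    ‖B‖ ^ 2 = ∑ i, ∑ j, (B i j) ^ 2 := by
  rw [Matrix.frobenius_norm_def]
  rw [← Real.rpow_natCast _ 2, ← Real.rpow_mul (by positivity)]
  norm_num

private lemma toCLM'_apply_le {d : ℕ} (B : Matrix (Fin d) (Fin d) ℝ)
    (v : EuclideanSpace ℝ (Fin d)) :
    ‖Matrix.toCLM' B v‖ ≤ ‖B‖ * ‖v‖ := by
  have h1 : ‖Matrix.toCLM' B v‖ ^ 2 ≤ (‖B‖ * ‖v‖) ^ 2 := by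
    have hv : ‖v‖ ^ 2 = ∑ j, (v j) ^ 2 := by
      rw [EuclideanSpace.norm_eq]; rw [Real.sq_sqrt (by positivity)]; simp [sq_abs]
    have hb : ‖Matrix.toCLM' B v‖ ^ 2 = ∑ i, (∑ j, B i j * v j) ^ 2 := by
      rw [EuclideanSpace.norm_eq, Real.sq_sqrt (by positivity)]
      congr 1; ext i
      simp [Matrix.toCLM', Matrix.toEuclideanLin_apply, Matrix.mulVec, dotProduct, sq_abs]
    rw [hb, mul_pow, frob_sq, hv, Finset.sum_mul]
    apply Finset.sum_le_sum
    intro i _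
    exact Finset.sum_mul_sq_le_sq_mul_sq _ _ _
  nlinarith [norm_nonneg (Matrix.toCLM' B v), mul_nonneg (norm_nonneg B) (norm_nonneg v)]

private lemma taylor_bound' {E : Type*} [NormedAddCommGroup E] [NormedSpace ℝ E]
    (g : E → E) (D : E → (E →L[ℝ] E))
    (hD : ∀ x, HasFDerivAt g (D x) x) (Hs : ℝ) (a b : E)
    (hLip : ∀ x y, ‖D x - D y‖ ≤ Hs * ‖x - y‖) :
    ‖g b - g a - D b (b - a)‖ ≤ Hs / 2 * ‖b - a‖ ^ 2 := by
  set e := b - a with he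
  set w := D b e with hw
  set φ : ℝ → E := fun t => g (a + t • e) - g a - t • w with hφ
  have hc : ∀ t : ℝ, HasDerivAt (fun s : ℝ => a + s • e) e t := by
    intro t
    simpa using ((hasDerivAt_id t).smul_const e).const_add a
  have hφ' : ∀ t : ℝ, HasDerivAt φ (D (a + t • e) e - w) t := by
    intro t
    have h1 : HasDerivAt (fun s : ℝ => g (a + s • e)) (D (a + t • e) e) t := by
      exact (hD (a + t • e)).comp_hasDerivAt t (hc t)
    exact ((h1.sub_const (g a)).sub ((hasDerivAt_id t).smul_const w)).congr_deriv (by simp)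
  set c := Hs * ‖e‖ ^ 2 with hcdef
  set B : ℝ → ℝ := fun t => c * (t - t ^ 2 / 2) with hB
  have hBd : ∀ t : ℝ, HasDerivAt B (c * (1 - t)) t := by
    intro t
    have : HasDerivAt (fun t : ℝ => c * (t - t ^ 2 / 2)) (c * (1 - (2 * t ^ 1) / 2)) t :=
      (((hasDerivAt_id t).sub ((hasDerivAt_pow 2 t).div_const 2))).const_mul c
    simpa using this.congr_deriv (by ring)
  have bound : ∀ t ∈ Set.Ico (0 : ℝ) 1, ‖D (a + t • e) e - w‖ ≤ c * (1 - t) := by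
    intro t ht
    have h1 : ‖D (a + t • e) e - w‖ ≤ ‖D (a + t • e) - D b‖ * ‖e‖ := by
      have := (D (a + t • e) - D b).le_opNorm e
      simpa using this
    have h2 : ‖D (a + t • e) - D b‖ ≤ Hs * ((1 - t) * ‖e‖) := by
      have h3 : a + t • e - b = (t - 1) • e := by rw [he]; module
      have h4 := hLip (a + t • e) b
      rw [h3, norm_smul] at h4
      have habs : |t - 1| = 1 - t := by
        rw [abs_of_nonpos (by linarith [ht.2])]; ring
      simpa [Real.norm_eq_abs, habs] using h4
    calc ‖D (a + t • e) e - w‖ ≤ ‖D (a + t • e) - D b‖ * ‖e‖ := h1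
      _ ≤ Hs * ((1 - t) * ‖e‖) * ‖e‖ := mul_le_mul_of_nonneg_right h2 (norm_nonneg _)
      _ = c * (1 - t) := by rw [hcdef]; ring
  have key := image_norm_le_of_norm_deriv_right_le_deriv_boundary
    (f := φ) (f' := fun t => D (a + t • e) e - w) (a := 0) (b := 1)
    (fun t _ => (hφ' t).continuousAt.continuousWithinAt)
    (fun t _ => (hφ' t).hasDerivWithinAt)
    (by simp [hφ, hB]) (fun t => hBd t) bound
    (Set.right_mem_Icc.2 zero_le_one)
  have hφ1 : φ 1 = g b - g a - w := by simp [hφ, he]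
  have hB1 : B 1 = c / 2 := by simp [hB]; ring
  rw [hφ1, hB1] at key
  calc ‖g b - g a - D b (b - a)‖ = ‖g b - g a - w‖ := by rw [hw, he]
    _ ≤ c / 2 := key
    _ = Hs / 2 * ‖b - a‖ ^ 2 := by rw [hcdef, he]; ring

set_option maxHeartbeats 1000000 in
/-- one (implicit) cubic-regularized Newton-type step of FedNL-CR. -/
theorem fednl_cr_one_step {d n : ℕ} (hn : 0 < n)
    (f : EuclideanSpace ℝ (Fin d) → ℝ)
    (g : EuclideanSpace ℝ (Fin d) → EuclideanSpace ℝ (Fin d))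
    (Hess : Fin n → EuclideanSpace ℝ (Fin d) → Matrix (Fin d) (Fin d) ℝ)
    (Hs LF μ : ℝ) (hμ : 0 < μ) (xstar : EuclideanSpace ℝ (Fin d))
    (hgrad : ∀ x, HasGradientAt f (g x) x)
    -- the Hessian of `f` is the average of the local Hessians
    (hHess : ∀ x, HasFDerivAt g (Matrix.toCLM' ((n : ℝ)⁻¹ • ∑ i, Hess i x)) x)
    -- `μ`-strong convexity of `f`: `μI ⪯ ∇²f(x)`
    (hsc : ∀ x v, μ * ‖v‖ ^ 2 ≤ ⟪Matrix.toCLM' ((n : ℝ)⁻¹ • ∑ i, Hess i x) v, v⟫)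
    -- the Hessian of `f` is `Hs`-Lipschitz in the spectral norm
    (hLipS : ∀ x y, ‖Matrix.toCLM' ((n : ℝ)⁻¹ • ∑ i, Hess i x) -
      Matrix.toCLM' ((n : ℝ)⁻¹ • ∑ i, Hess i y)‖ ≤ Hs * ‖x - y‖)
    -- each local Hessian is `LF`-Lipschitz in the Frobenius norm
    (hLipF : ∀ i x y, ‖Hess i x - Hess i y‖ ≤ LF * ‖x - y‖)
    (hstar : g xstar = 0)
    (Hk : Fin n → Matrix (Fin d) (Fin d) ℝ)
    (xk xnext : EuclideanSpace ℝ (Fin d))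
    -- the corrected estimate `M_k := H^k + l^k I` with `l^k = (1/n)Σᵢ ‖Hᵢ^k − ∇²fᵢ(x^k)‖_F`
    (Mk : Matrix (Fin d) (Fin d) ℝ)
    (hMk : Mk = (n : ℝ)⁻¹ • ∑ i, Hk i +
      ((n : ℝ)⁻¹ * ∑ i, ‖Hk i - Hess i xk‖) • (1 : Matrix (Fin d) (Fin d) ℝ))
    -- `∇²f(x^k) ⪯ M_k`
    (hdom : ∀ v, ⟪Matrix.toCLM' ((n : ℝ)⁻¹ • ∑ i, Hess i xk) v, v⟫ ≤
      ⟪Matrix.toCLM' Mk v, v⟫)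
    -- the implicit cubic-regularized matrix `A := M_k + (Hs/2)‖x^{k+1}−x^k‖ I`
    (A : Matrix (Fin d) (Fin d) ℝ)
    (hAdef : A = Mk + (Hs / 2 * ‖xnext - xk‖) • (1 : Matrix (Fin d) (Fin d) ℝ))
    (Ainv : EuclideanSpace ℝ (Fin d) →L[ℝ] EuclideanSpace ℝ (Fin d))
    (hinv1 : Ainv.comp (Matrix.toCLM' A) = ContinuousLinearMap.id ℝ _)
    (hinv2 : (Matrix.toCLM' A).comp Ainv = ContinuousLinearMap.id ℝ _)
    (hiter : xnext = xk - Ainv (g xk)) :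
    ‖xnext - xstar‖ ^ 2 ≤
      5 * Hs ^ 2 / (4 * μ ^ 2) * (‖xnext - xstar‖ ^ 2 * ‖xk - xstar‖ ^ 2) +
        20 / μ ^ 2 * ‖xk - xstar‖ ^ 2 *
          ((n : ℝ)⁻¹ * ∑ i, ‖Hk i - Hess i xstar‖ ^ 2) +
        5 * (Hs ^ 2 + 8 * LF ^ 2) / (2 * μ ^ 2) * ‖xk - xstar‖ ^ 4 := by
  rcases Nat.eq_zero_or_pos d with hd | hd
  · -- trivial dimension-zero case
    subst hd
    have h1 : xnext - xstar = 0 := Subsingleton.elim _ _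
    have h2 : xk - xstar = 0 := Subsingleton.elim _ _
    simp [h1, h2]
  -- notation
  set N' : ℝ := ‖xnext - xstar‖ with hN'
  set N : ℝ := ‖xk - xstar‖ with hN
  have hN0 : 0 ≤ N := norm_nonneg _
  have hN'0 : 0 ≤ N' := norm_nonneg _
  -- nonnegativity of the Lipschitz constants
  set u : EuclideanSpace ℝ (Fin d) := EuclideanSpace.single ⟨0, hd⟩ 1 with hu
  have hunorm : ‖u‖ = 1 := by simp [hu]
  have hHs0 : 0 ≤ Hs := by
    have := hLipS u 0
    simp only [sub_zero, hunorm, mul_one] at this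
    exact le_trans (norm_nonneg _) this
  have hLF0 : 0 ≤ LF := by
    have := hLipF ⟨0, hn⟩ u 0
    simp only [sub_zero, hunorm, mul_one] at this
    exact le_trans (norm_nonneg _) this
  set cA : ℝ := Hs / 2 * ‖xnext - xk‖ with hcA
  have hcA0 : 0 ≤ cA := by
    apply mul_nonneg (by linarith) (norm_nonneg _)
  set l : ℝ := (n : ℝ)⁻¹ * ∑ i, ‖Hk i - Hess i xk‖ with hl
  have hl0 : 0 ≤ l := by
    apply mul_nonneg (by positivity)
    exact Finset.sum_nonneg fun i _ => norm_nonneg _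
  set s : ℝ := (n : ℝ)⁻¹ * ∑ i, ‖Hk i - Hess i xstar‖ with hs
  have hs0 : 0 ≤ s := by
    apply mul_nonneg (by positivity)
    exact Finset.sum_nonneg fun i _ => norm_nonneg _
  set s2 : ℝ := (n : ℝ)⁻¹ * ∑ i, ‖Hk i - Hess i xstar‖ ^ 2 with hs2def
  -- A is positive definite: μ ‖v‖ ≤ ‖(toCLM' A) v‖
  have hTA : ∀ v : EuclideanSpace ℝ (Fin d),
      Matrix.toCLM' A v = Matrix.toCLM' Mk v + cA • v := by
    intro v
    rw [hAdef, toCLM'_add, toCLM'_smul, toCLM'_one]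
    simp [hcA]
  have hAlow : ∀ v : EuclideanSpace ℝ (Fin d), μ * ‖v‖ ≤ ‖Matrix.toCLM' A v‖ := by
    intro v
    have hi : μ * ‖v‖ ^ 2 ≤ ⟪Matrix.toCLM' A v, v⟫ := by
      have h1 := hsc xk v
      have h2 := hdom v
      have h3 : ⟪Matrix.toCLM' A v, v⟫ = ⟪Matrix.toCLM' Mk v, v⟫ + cA * ‖v‖ ^ 2 := by
        rw [hTA v, inner_add_left, real_inner_smul_left, real_inner_self_eq_norm_sq]
      nlinarith [mul_nonneg hcA0 (sq_nonneg ‖v‖)]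
    have hcs : ⟪Matrix.toCLM' A v, v⟫ ≤ ‖Matrix.toCLM' A v‖ * ‖v‖ := real_inner_le_norm _ _
    rcases eq_or_ne v 0 with rfl | hv
    · simp
    · have hvpos : 0 < ‖v‖ := norm_pos_iff.mpr hv
      have : μ * ‖v‖ ^ 2 ≤ ‖Matrix.toCLM' A v‖ * ‖v‖ := le_trans hi hcs
      nlinarith
  have hAinv : ∀ v : EuclideanSpace ℝ (Fin d), μ * ‖Ainv v‖ ≤ ‖v‖ := by
    intro v
    have h1 : Matrix.toCLM' A (Ainv v) = v := by
      have := ContinuousLinearMap.ext_iff.mp hinv2 v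
      simpa using this
    have := hAlow (Ainv v)
    rw [h1] at this
    exact this
  -- the main identity
  have hER : xnext - xstar = Ainv (Matrix.toCLM' A (xk - xstar) - g xk) := by
    have h1 : Ainv (Matrix.toCLM' A (xk - xstar)) = xk - xstar := by
      have := ContinuousLinearMap.ext_iff.mp hinv1 (xk - xstar)
      simpa using this
    rw [map_sub, h1, hiter]
    abel
  -- decompose the residual
  set Bk : Matrix (Fin d) (Fin d) ℝ := (n : ℝ)⁻¹ • ∑ i, Hess i xk with hBk
  set Dmat : Matrix (Fin d) (Fin d) ℝ := (n : ℝ)⁻¹ • ∑ i, (Hk i - Hess i xk) with hDmat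
  set Rem : EuclideanSpace ℝ (Fin d) :=
    g xk - g xstar - Matrix.toCLM' Bk (xk - xstar) with hRem
  have hmatsplit : (n : ℝ)⁻¹ • ∑ i, Hk i = Dmat + Bk := by
    rw [hDmat, hBk, ← smul_add, Finset.sum_sub_distrib]
    congr 1
    abel
  have hRdecomp : Matrix.toCLM' A (xk - xstar) - g xk =
      Matrix.toCLM' Dmat (xk - xstar) + l • (xk - xstar) + cA • (xk - xstar) - Rem := by
    rw [hRem, hstar]
    rw [hTA (xk - xstar), hMk, hmatsplit, toCLM'_add, toCLM'_add, toCLM'_smul l 1, toCLM'_one]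
    simp only [ContinuousLinearMap.add_apply, ContinuousLinearMap.smul_apply,
      ContinuousLinearMap.coe_smul', Pi.smul_apply, ContinuousLinearMap.coe_id', id_eq]
    abel
  -- norm bounds on pieces
  have hDnorm : ‖Dmat‖ ≤ l := by
    rw [hDmat, hl]
    rw [norm_smul]
    simp only [norm_inv, Real.norm_natCast]
    apply mul_le_mul_of_nonneg_left (norm_sum_le _ _) (by positivity)
  have hTay : ‖Rem‖ ≤ Hs / 2 * N ^ 2 := by
    rw [hRem, hBk, hN]
    exact taylor_bound' g (fun x => Matrix.toCLM' ((n : ℝ)⁻¹ • ∑ i, Hess i x))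
      hHess Hs xstar xk hLipS
  have hRnorm : ‖Matrix.toCLM' A (xk - xstar) - g xk‖ ≤
      2 * l * N + cA * N + Hs / 2 * N ^ 2 := by
    rw [hRdecomp]
    have h1 : ‖Matrix.toCLM' Dmat (xk - xstar)‖ ≤ l * N := by
      calc ‖Matrix.toCLM' Dmat (xk - xstar)‖ ≤ ‖Dmat‖ * N := toCLM'_apply_le _ _
        _ ≤ l * N := mul_le_mul_of_nonneg_right hDnorm hN0
    have h2 : ‖l • (xk - xstar)‖ = l * N := by
      rw [norm_smul, Real.norm_eq_abs, abs_of_nonneg hl0]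
    have h3 : ‖cA • (xk - xstar)‖ = cA * N := by
      rw [norm_smul, Real.norm_eq_abs, abs_of_nonneg hcA0]
    calc ‖Matrix.toCLM' Dmat (xk - xstar) + l • (xk - xstar) + cA • (xk - xstar) - Rem‖
        ≤ ‖Matrix.toCLM' Dmat (xk - xstar) + l • (xk - xstar) + cA • (xk - xstar)‖ + ‖Rem‖ :=
          norm_sub_le _ _
      _ ≤ ‖Matrix.toCLM' Dmat (xk - xstar) + l • (xk - xstar)‖ + ‖cA • (xk - xstar)‖ + ‖Rem‖ := by
          gcongr; exact norm_add_le _ _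
      _ ≤ ‖Matrix.toCLM' Dmat (xk - xstar)‖ + ‖l • (xk - xstar)‖ + ‖cA • (xk - xstar)‖ + ‖Rem‖ := by
          gcongr; exact norm_add_le _ _
      _ ≤ l * N + l * N + cA * N + Hs / 2 * N ^ 2 := by
          rw [h2, h3]; gcongr
      _ = 2 * l * N + cA * N + Hs / 2 * N ^ 2 := by ring
  -- l ≤ s + LF * N
  have hlbound : l ≤ s + LF * N := by
    have h1 : ∀ i : Fin n, ‖Hk i - Hess i xk‖ ≤ ‖Hk i - Hess i xstar‖ + LF * N := by
      intro i
      have h2 : Hk i - Hess i xk = (Hk i - Hess i xstar) + (Hess i xstar - Hess i xk) := by abel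
      have h3 : ‖Hess i xstar - Hess i xk‖ ≤ LF * N := by
        have h5 := hLipF i xstar xk
        rwa [norm_sub_rev xstar xk, ← hN] at h5
      calc ‖Hk i - Hess i xk‖ ≤ ‖Hk i - Hess i xstar‖ + ‖Hess i xstar - Hess i xk‖ := by
            rw [h2]; exact norm_add_le _ _
        _ ≤ ‖Hk i - Hess i xstar‖ + LF * N := by gcongr
    have h4 : ∑ i, ‖Hk i - Hess i xk‖ ≤ (∑ i, ‖Hk i - Hess i xstar‖) + n * (LF * N) := by
      calc ∑ i, ‖Hk i - Hess i xk‖ ≤ ∑ i : Fin n, (‖Hk i - Hess i xstar‖ + LF * N) :=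
            Finset.sum_le_sum fun i _ => h1 i
        _ = (∑ i, ‖Hk i - Hess i xstar‖) + n * (LF * N) := by
            rw [Finset.sum_add_distrib, Finset.sum_const, Finset.card_univ, Fintype.card_fin,
              nsmul_eq_mul]
    have hninv : (n : ℝ)⁻¹ * n = 1 := by
      field_simp
    calc l ≤ (n : ℝ)⁻¹ * ((∑ i, ‖Hk i - Hess i xstar‖) + n * (LF * N)) := by
          rw [hl]; exact mul_le_mul_of_nonneg_left h4 (by positivity)
      _ = s + (n : ℝ)⁻¹ * n * (LF * N) := by rw [hs]; ring
      _ = s + LF * N := by rw [hninv]; ring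
  -- cA ≤ Hs/2 * (N' + N)
  have hcAbound : cA ≤ Hs / 2 * (N' + N) := by
    have h1 : ‖xnext - xk‖ ≤ N' + N := by
      calc ‖xnext - xk‖ = ‖(xnext - xstar) - (xk - xstar)‖ := by congr 1; abel
        _ ≤ N' + N := norm_sub_le _ _
    rw [hcA]
    apply mul_le_mul_of_nonneg_left h1 (by linarith)
  -- main scalar inequality
  have hmain : μ * N' ≤ Hs / 2 * N' * N + Hs * N ^ 2 + 2 * LF * N ^ 2 + 2 * s * N := by
    have h1 : μ * N' ≤ ‖Matrix.toCLM' A (xk - xstar) - g xk‖ := by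
      rw [hN', hER]
      exact hAinv _
    have h2 : μ * N' ≤ 2 * l * N + cA * N + Hs / 2 * N ^ 2 := le_trans h1 hRnorm
    nlinarith [mul_le_mul_of_nonneg_right hlbound hN0, mul_le_mul_of_nonneg_right hcAbound hN0]
  -- s^2 ≤ s2
  have hssq : s ^ 2 ≤ s2 := by
    have h1 : (∑ i, ‖Hk i - Hess i xstar‖) ^ 2 ≤ n * ∑ i, ‖Hk i - Hess i xstar‖ ^ 2 := by
      have := sq_sum_le_card_mul_sum_sq (s := (Finset.univ : Finset (Fin n)))
        (f := fun i => ‖Hk i - Hess i xstar‖)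
      simpa [Finset.card_univ] using this
    have hnpos : (0 : ℝ) < n := by exact_mod_cast hn
    rw [hs, hs2def, mul_pow]
    calc ((n : ℝ)⁻¹) ^ 2 * (∑ i, ‖Hk i - Hess i xstar‖) ^ 2
        ≤ ((n : ℝ)⁻¹) ^ 2 * (n * ∑ i, ‖Hk i - Hess i xstar‖ ^ 2) :=
          mul_le_mul_of_nonneg_left h1 (by positivity)
      _ = (n : ℝ)⁻¹ * ((n : ℝ)⁻¹ * n) * ∑ i, ‖Hk i - Hess i xstar‖ ^ 2 := by ring
      _ = (n : ℝ)⁻¹ * ∑ i, ‖Hk i - Hess i xstar‖ ^ 2 := by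
          rw [inv_mul_cancel₀ (ne_of_gt hnpos)]; ring
  -- square and combine
  have hsq : (μ * N') ^ 2 ≤ (Hs / 2 * N' * N + Hs * N ^ 2 + 2 * LF * N ^ 2 + 2 * s * N) ^ 2 := by
    apply pow_le_pow_left₀ (by positivity) hmain
  set a : ℝ := Hs / 2 * N' * N
  set b : ℝ := Hs * N ^ 2
  set c : ℝ := 2 * LF * N ^ 2
  set dd : ℝ := 2 * s * N
  have hCS : (a + b + c + dd) ^ 2 ≤ 5 * a ^ 2 + 5 / 2 * b ^ 2 + 5 * c ^ 2 + 5 * dd ^ 2 := by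
    nlinarith [sq_nonneg (2 * a - b), sq_nonneg (2 * c - b), sq_nonneg (2 * dd - b),
      sq_nonneg (a - c), sq_nonneg (a - dd), sq_nonneg (c - dd)]
  have key : μ ^ 2 * N' ^ 2 ≤
      5 * Hs ^ 2 / 4 * (N' ^ 2 * N ^ 2) + 20 * N ^ 2 * s2 +
        5 * (Hs ^ 2 + 8 * LF ^ 2) / 2 * N ^ 4 := by
    have h5 : 5 * dd ^ 2 ≤ 20 * N ^ 2 * s2 := by
      have : dd ^ 2 = 4 * s ^ 2 * N ^ 2 := by simp only [dd]; ring
      rw [this]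
      linarith [mul_le_mul_of_nonneg_right hssq (sq_nonneg N)]
    have h6 : 5 * a ^ 2 = 5 * Hs ^ 2 / 4 * (N' ^ 2 * N ^ 2) := by simp only [a]; ring
    have h7 : 5 / 2 * b ^ 2 + 5 * c ^ 2 = 5 * (Hs ^ 2 + 8 * LF ^ 2) / 2 * N ^ 4 := by
      simp only [b, c]; ring
    have e1 : μ ^ 2 * N' ^ 2 = (μ * N') ^ 2 := by ring
    rw [e1]
    calc (μ * N') ^ 2 ≤ (a + b + c + dd) ^ 2 := hsq
      _ ≤ 5 * a ^ 2 + 5 / 2 * b ^ 2 + 5 * c ^ 2 + 5 * dd ^ 2 := hCS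
      _ ≤ 5 * Hs ^ 2 / 4 * (N' ^ 2 * N ^ 2) + 20 * N ^ 2 * s2 +
          5 * (Hs ^ 2 + 8 * LF ^ 2) / 2 * N ^ 4 := by linarith [h5, h6, h7]
  -- divide by μ²
  have hμ2 : (0 : ℝ) < μ ^ 2 := by positivity
  have expand : 5 * Hs ^ 2 / (4 * μ ^ 2) * (N' ^ 2 * N ^ 2) +
      20 / μ ^ 2 * N ^ 2 * s2 + 5 * (Hs ^ 2 + 8 * LF ^ 2) / (2 * μ ^ 2) * N ^ 4 =
      (5 * Hs ^ 2 / 4 * (N' ^ 2 * N ^ 2) + 20 * N ^ 2 * s2 +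
        5 * (Hs ^ 2 + 8 * LF ^ 2) / 2 * N ^ 4) / μ ^ 2 := by
    field_simp
  rw [expand, le_div_iff₀ hμ2]
  linarith [key]
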